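/- Let ℘ : ℝ² → ℝ be a C¹ nonnegative function with ℘(x₁,x₂) > 0 whenever x₁ = x₂ = 0 (e.g. ℘(x₁,x₂) = max{0, 1/r² − (x₁²+x₂²)}⁴). Let ς ∈ ℝ and define φ : ℝ³ → ℝ⁵ by φ(x) = (x₁, x₂, −x₁x₃, −x₂x₃, ℘(x₁,x₂)(x₃−ς)). Then φ is an injective immersion on all of ℝ³: its Jacobian has rank 3 everywhere and φ is injective. -/

import Mathlib

/-- With ℘ nonnegative, C¹, and positive at the origin, the map
φ(x) = (x₁, x₂, −x₁x₃, −x₂x₃, ℘(x₁,x₂)(x₃−ς)) is an injective immersion on all of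
ℝ³: it is injective and its Jacobian has full rank 3 everywhere. -/
theorem stmt_16 (℘ : ℝ → ℝ → ℝ)
    (h℘C : ContDiff ℝ 1 (fun p : ℝ × ℝ => ℘ p.1 p.2))
    (h℘nn : ∀ x₁ x₂, 0 ≤ ℘ x₁ x₂)
    (h℘pos : ∀ x₁ x₂, x₁ = 0 → x₂ = 0 → 0 < ℘ x₁ x₂)
    (ς : ℝ) :
    let φ : EuclideanSpace ℝ (Fin 3) → EuclideanSpace ℝ (Fin 5) :=
      fun x => (WithLp.equiv 2 (Fin 5 → ℝ)).symm
        ![x 0, x 1, -(x 0 * x 2), -(x 1 * x 2), ℘ (x 0) (x 1) * (x 2 - ς)]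
    Function.Injective φ ∧ ∀ x, Function.Injective (fderiv ℝ φ x) := by
  intro φ
  constructor
  · intro a b hab
    have hcomp : ∀ i : Fin 5,
        (![a 0, a 1, -(a 0 * a 2), -(a 1 * a 2), ℘ (a 0) (a 1) * (a 2 - ς)] : Fin 5 → ℝ) i =
        ![b 0, b 1, -(b 0 * b 2), -(b 1 * b 2), ℘ (b 0) (b 1) * (b 2 - ς)] i := by
      intro i
      have := congrArg (fun v => (WithLp.equiv 2 (Fin 5 → ℝ)) v i) hab
      exact this
    have h0 : a 0 = b 0 := by have := hcomp 0; simpa using this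
    have h1 : a 1 = b 1 := by have := hcomp 1; simpa using this
    have h2 : a 0 * a 2 = b 0 * b 2 := by have := hcomp 2; simpa using this
    have h3 : a 1 * a 2 = b 1 * b 2 := by have := hcomp 3; simpa using this
    have h4 : ℘ (a 0) (a 1) * (a 2 - ς) = ℘ (b 0) (b 1) * (b 2 - ς) := by
      have := hcomp 4; simpa using this
    have h22 : a 2 = b 2 := by
      by_cases ha0 : a 0 = 0
      · by_cases ha1 : a 1 = 0
        · have hp := h℘pos (a 0) (a 1) ha0 ha1
          rw [h0, h1] at h4
          have := mul_left_cancel₀ (by rw [← h0, ← h1]; exact ne_of_gt hp) h4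
          linarith
        · rw [← h1] at h3
          exact mul_left_cancel₀ ha1 h3
      · rw [← h0] at h2
        exact mul_left_cancel₀ ha0 h2
    ext i
    fin_cases i <;> assumption
  · intro x
    set P : Fin 3 → (EuclideanSpace ℝ (Fin 3) →L[ℝ] ℝ) := fun i => EuclideanSpace.proj i with hP
    have hPd : ∀ i : Fin 3, HasFDerivAt (fun y : EuclideanSpace ℝ (Fin 3) => y i) (P i) x :=
      fun i => (P i).hasFDerivAt
    set D : ℝ × ℝ →L[ℝ] ℝ := fderiv ℝ (fun p : ℝ × ℝ => ℘ p.1 p.2) (x 0, x 1) with hD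
    have hDd : HasFDerivAt (fun p : ℝ × ℝ => ℘ p.1 p.2) D (x 0, x 1) :=
      ((h℘C.differentiable one_ne_zero) (x 0, x 1)).hasFDerivAt
    set L : Fin 5 → (EuclideanSpace ℝ (Fin 3) →L[ℝ] ℝ) :=
      ![P 0, P 1, -(x 0 • P 2 + x 2 • P 0), -(x 1 • P 2 + x 2 • P 1),
        ℘ (x 0) (x 1) • P 2 + (x 2 - ς) • (D.comp ((P 0).prod (P 1)))] with hL
    have hg : HasFDerivAt (fun y : EuclideanSpace ℝ (Fin 3) =>
        (![y 0, y 1, -(y 0 * y 2), -(y 1 * y 2), ℘ (y 0) (y 1) * (y 2 - ς)] : Fin 5 → ℝ))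
        (ContinuousLinearMap.pi L) x := by
      apply hasFDerivAt_pi''
      intro i
      fin_cases i
      · simpa [L] using hPd 0
      · simpa [L] using hPd 1
      · simpa [L] using ((hPd 0).fun_mul (hPd 2)).fun_neg
      · simpa [L] using ((hPd 1).fun_mul (hPd 2)).fun_neg
      · have hc : HasFDerivAt (fun y : EuclideanSpace ℝ (Fin 3) => ℘ (y 0) (y 1))
            (D.comp ((P 0).prod (P 1))) x :=
          hDd.comp x (f := fun y : EuclideanSpace ℝ (Fin 3) => (y 0, y 1)) (((hPd 0).prodMk (hPd 1)))
        have hd : HasFDerivAt (fun y : EuclideanSpace ℝ (Fin 3) => y 2 - ς) (P 2) x :=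
          (hPd 2).sub_const ς
        simpa [L] using hc.fun_mul hd
    have hφd : HasFDerivAt (fun x : EuclideanSpace ℝ (Fin 3) =>
        (WithLp.equiv 2 (Fin 5 → ℝ)).symm
          ![x 0, x 1, -(x 0 * x 2), -(x 1 * x 2), ℘ (x 0) (x 1) * (x 2 - ς)])
        (((PiLp.continuousLinearEquiv 2 ℝ (fun _ : Fin 5 => ℝ)).symm :
            (Fin 5 → ℝ) →L[ℝ] EuclideanSpace ℝ (Fin 5)).comp (ContinuousLinearMap.pi L)) x :=
      ((PiLp.continuousLinearEquiv 2 ℝ (fun _ : Fin 5 => ℝ)).symm :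
          (Fin 5 → ℝ) →L[ℝ] EuclideanSpace ℝ (Fin 5)).hasFDerivAt.comp x hg
    rw [hφd.fderiv]
    rw [ContinuousLinearMap.coe_comp']
    apply Function.Injective.comp
    · exact (PiLp.continuousLinearEquiv 2 ℝ (fun _ : Fin 5 => ℝ)).symm.injective
    · rw [injective_iff_map_eq_zero]
      intro v hv
      have hcomp : ∀ i : Fin 5, L i v = 0 := by
        intro i
        have := congrFun hv i
        simpa using this
      have h0 : v 0 = 0 := by have := hcomp 0; simpa [L, P] using this
      have h1 : v 1 = 0 := by have := hcomp 1; simpa [L, P] using this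
      have h2 : x 0 * v 2 + x 2 * v 0 = 0 := by
        have := hcomp 2
        simp [L, P, neg_eq_zero] at this
        linarith
      have h4 : ℘ (x 0) (x 1) * v 2 + (x 2 - ς) * D (v 0, v 1) = 0 := by
        have := hcomp 4
        simpa [L, P] using this
      have h2' : x 0 * v 2 = 0 := by rw [h0] at h2; linarith
      have h3' : x 1 * v 2 = 0 := by
        have h3 : x 1 * v 2 + x 2 * v 1 = 0 := by
          have := hcomp 3
          simp [L, P, neg_eq_zero] at this
          linarith
        rw [h1] at h3; linarith
      have h22 : v 2 = 0 := by
        by_cases hx0 : x 0 = 0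
        · by_cases hx1 : x 1 = 0
          · have hDz : D (v 0, v 1) = 0 := by rw [h0, h1]; exact D.map_zero
            rw [hDz] at h4
            have hp := h℘pos (x 0) (x 1) hx0 hx1
            have : ℘ (x 0) (x 1) * v 2 = 0 := by linarith
            exact (mul_eq_zero.mp this).resolve_left (ne_of_gt hp)
          · exact (mul_eq_zero.mp h3').resolve_left hx1
        · exact (mul_eq_zero.mp h2').resolve_left hx0
      ext i
      fin_cases i <;> simpa using ‹_›
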